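/- For all $\mu > 0$, the trigamma function satisfies $\psi^{(1)}(\mu) < \frac{1}{\mu} + \frac{1}{2\mu^2} + \frac{1}{6\mu^3}$. -/

import Mathlib

open Real Set Filter Topology Finset

lemma Gamma_ne_neg_nat {y : ℝ} (hy : 0 < y) : ∀ m : ℕ, y ≠ -m :=
  fun m => ne_of_gt (lt_of_le_of_lt (by simpa using (Nat.cast_nonneg m : (0:ℝ) ≤ m) : -(m:ℝ) ≤ 0) hy)

/-- The digamma function `ψ = Γ'/Γ`. -/
noncomputable def digamma (x : ℝ) : ℝ := deriv Real.Gamma x / Real.Gamma x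

/-- The trigamma function `ψ⁽¹⁾ = ψ'`. -/
noncomputable def trigamma (x : ℝ) : ℝ := deriv digamma x

noncomputable def psif : ℝ → ℝ := deriv (Real.log ∘ Real.Gamma)

-- recurrence
lemma psif_rec {x : ℝ} (hx : 0 < x) : psif (x + 1) = psif x + 1 / x := by
  have hder : ∀ {y : ℝ}, 0 < y → DifferentiableAt ℝ (Real.log ∘ Real.Gamma) y := by
    intro y hy
    exact (Real.differentiableAt_Gamma (Gamma_ne_neg_nat ‹_›)).log
      (Real.Gamma_pos_of_pos hy).ne'
  unfold psif
  rw [← deriv_comp_add_const, one_div, ← Real.deriv_log,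
    ← deriv_add (hder (by positivity)) (Real.differentiableAt_log hx.ne')]
  apply Filter.EventuallyEq.deriv_eq
  filter_upwards [eventually_gt_nhds hx] with y hy
  simp only [Function.comp_apply, Pi.add_apply, Real.Gamma_add_one hy.ne',
    Real.log_mul hy.ne' (Real.Gamma_pos_of_pos hy).ne', add_comm]

-- squeeze
lemma psif_le {y : ℝ} (hy : 0 < y) : psif y ≤ Real.log y := by
  have h := Real.convexOn_log_Gamma.deriv_le_slope (mem_Ioi.2 hy)
    (mem_Ioi.2 (by linarith : (0:ℝ) < y + 1)) (by linarith)
    ((Real.differentiableAt_Gamma (Gamma_ne_neg_nat ‹_›)).log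
      (Real.Gamma_pos_of_pos hy).ne')
  rw [slope_def_field] at h
  simp only [Function.comp_apply, Real.Gamma_add_one hy.ne',
    Real.log_mul hy.ne' (Real.Gamma_pos_of_pos hy).ne'] at h
  calc psif y ≤ _ := h
    _ = Real.log y := by field_simp; ring

lemma le_psif {y : ℝ} (hy : 1 < y) : Real.log (y - 1) ≤ psif y := by
  have h := Real.convexOn_log_Gamma.slope_le_deriv
    (mem_Ioi.2 (by linarith : (0:ℝ) < y - 1)) (mem_Ioi.2 (by linarith : (0:ℝ) < y))
    (by linarith)
    ((Real.differentiableAt_Gamma (Gamma_ne_neg_nat (by linarith))).log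
      (Real.Gamma_pos_of_pos (by linarith)).ne')
  rw [slope_def_field] at h
  have h1 : (0:ℝ) < y - 1 := by linarith
  have hsub : (y - 1) + 1 = y := by ring
  have : (Real.log ∘ Real.Gamma) y = Real.log (y-1) + (Real.log ∘ Real.Gamma) (y-1) := by
    have hg := Real.Gamma_add_one h1.ne'
    rw [hsub] at hg
    simp only [Function.comp_apply, hg,
      Real.log_mul h1.ne' (Real.Gamma_pos_of_pos h1).ne']
  rw [this] at h
  calc Real.log (y - 1) = _ := by field_simp; ring
    _ ≤ psif y := h

lemma psif_add_nat {x : ℝ} (hx : 0 < x) (N : ℕ) :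
    psif (x + N) = psif x + ∑ k ∈ range N, (x + k)⁻¹ := by
  induction N with
  | zero => simp
  | succ n ih =>
    have h1 : x + (n + 1 : ℕ) = (x + n) + 1 := by push_cast; ring
    rw [h1, psif_rec (by positivity), ih, Finset.sum_range_succ, one_div]
    ring

lemma tendsto_D_psif {x : ℝ} (hx : 0 < x) :
    Tendsto (fun N : ℕ => Real.log N - ∑ k ∈ range N, (x + k)⁻¹) atTop (𝓝 (psif x)) := by
  have key : ∀ N : ℕ, 1 ≤ N →
      psif x + (Real.log N - Real.log (x + N)) ≤ Real.log N - ∑ k ∈ range N, (x + k)⁻¹ ∧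
      Real.log N - ∑ k ∈ range N, (x + k)⁻¹ ≤ psif x + (Real.log N - Real.log (x + N - 1)) := by
    intro N hN
    have hgt : 1 < x + N := by
      have : (1:ℝ) ≤ N := by exact_mod_cast hN
      linarith
    have h1 := psif_le (by linarith : (0:ℝ) < x + N)
    have h2 := le_psif hgt
    have h3 := psif_add_nat hx N
    constructor <;> nlinarith [h1, h2, h3]
  have hmain : ∀ c : ℝ, Tendsto (fun N : ℕ => Real.log N - Real.log (c + N)) atTop (𝓝 0) := by
    intro c
    have h : Tendsto (fun N : ℕ => (c + N)/N) atTop (𝓝 1) := by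
      have h1 : Tendsto (fun N : ℕ => c / N + 1) atTop (𝓝 (0+1)) :=
        (tendsto_const_div_atTop_nhds_zero_nat c).add tendsto_const_nhds
      rw [zero_add] at h1
      apply h1.congr'
      filter_upwards [eventually_ge_atTop 1] with N hN
      have hN0 : (N:ℝ) ≠ 0 := by positivity
      field_simp
    have h2 : Tendsto (fun N : ℕ => Real.log ((c + N)/N)) atTop (𝓝 0) := by
      have := ((Real.continuousAt_log one_ne_zero).tendsto).comp h
      simpa [Function.comp_def] using this
    have h3 := h2.neg
    rw [neg_zero] at h3
    apply h3.congr'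
    filter_upwards [eventually_ge_atTop (⌈|c|⌉₊ + 1)] with N hN
    have hN1 : (1:ℝ) ≤ (N:ℝ) := by
      have : 1 ≤ N := le_trans (Nat.le_add_left 1 _) hN
      exact_mod_cast this
    have hcN : 0 < c + N := by
      have : |c| ≤ ⌈|c|⌉₊ := Nat.le_ceil _
      have h4 : (⌈|c|⌉₊:ℝ) + 1 ≤ N := by exact_mod_cast hN
      have := neg_abs_le c
      linarith
    rw [Real.log_div hcN.ne' (by linarith : (N:ℝ) ≠ 0)]
    ring
  have hlo : Tendsto (fun N : ℕ => psif x + (Real.log N - Real.log (x + N))) atTop (𝓝 (psif x)) := by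
    simpa using tendsto_const_nhds.add (hmain x)
  have hhi : Tendsto (fun N : ℕ => psif x + (Real.log N - Real.log (x + N - 1))) atTop
      (𝓝 (psif x)) := by
    have : Tendsto (fun N : ℕ => psif x + (Real.log N - Real.log ((x-1) + N))) atTop
        (𝓝 (psif x + 0)) := tendsto_const_nhds.add (hmain (x - 1))
    rw [add_zero] at this
    apply this.congr
    intro N
    ring_nf
  apply tendsto_of_tendsto_of_tendsto_of_le_of_le' hlo hhi
  · filter_upwards [eventually_ge_atTop 1] with N hN using (key N hN).1
  · filter_upwards [eventually_ge_atTop 1] with N hN using (key N hN).2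

lemma hasDerivAt_D (N : ℕ) {x : ℝ} (hx : 0 < x) :
    HasDerivAt (fun y : ℝ => Real.log N - ∑ k ∈ range N, (y + k)⁻¹)
      (∑ k ∈ range N, ((x + k) ^ 2)⁻¹) x := by
  have h : HasDerivAt (fun y : ℝ => ∑ k ∈ range N, (y + k)⁻¹)
      (∑ k ∈ range N, -((x + k) ^ 2)⁻¹) x := by
    apply HasDerivAt.fun_sum
    intro k hk
    have hne : x + k ≠ 0 := by positivity
    have := ((hasDerivAt_id x).add_const (k:ℝ)).inv hne
    simpa [neg_div, Pi.inv_def] using this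
  have := h.const_sub (Real.log N)
  simpa using this

lemma hasDerivAt_psif {μ : ℝ} (hμ : 0 < μ) :
    HasDerivAt psif (∑' n : ℕ, ((μ + n) ^ 2)⁻¹) μ := by
  set c := μ / 2 with hc
  have hc0 : 0 < c := by positivity
  set m := min c 1 with hm
  have hm0 : 0 < m := lt_min hc0 one_pos
  have hub : ∀ (k : ℕ) (x : ℝ), x ∈ Ioi c → ‖((x + k) ^ 2)⁻¹‖ ≤ (m ^ 2)⁻¹ * (((k:ℝ) + 1) ^ 2)⁻¹ := by
    intro k x hx
    rw [Set.mem_Ioi] at hx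
    have hk0 : (0:ℝ) ≤ k := Nat.cast_nonneg k
    have hxk : 0 < x + k := by linarith
    have hlow : m * ((k:ℝ) + 1) ≤ x + k := by
      have h1 : m ≤ c := min_le_left _ _
      have h2 : m ≤ 1 := min_le_right _ _
      have : m * ((k:ℝ)+1) = m + m * k := by ring
      nlinarith [Nat.cast_nonneg (α := ℝ) k]
    rw [norm_inv, norm_pow, Real.norm_eq_abs, abs_of_pos hxk, ← mul_inv, ← mul_pow]
    apply inv_anti₀
    · positivity
    · apply pow_le_pow_left₀ (by positivity) hlow
  have hsum : Summable (fun k : ℕ => (m ^ 2)⁻¹ * (((k:ℝ) + 1) ^ 2)⁻¹) := by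
    apply Summable.mul_left
    have : Summable (fun k : ℕ => ((k:ℝ) ^ 2)⁻¹) := by
      simpa using Real.summable_one_div_nat_pow.mpr one_lt_two
    exact_mod_cast (summable_nat_add_iff 1).mpr this
  apply hasDerivAt_of_tendstoUniformlyOn (l := atTop) (f := fun (N:ℕ) (y:ℝ) => Real.log N - ∑ k ∈ Finset.range N, (y + k)⁻¹)
    (f' := fun (N:ℕ) (y:ℝ) => ∑ k ∈ Finset.range N, ((y + k) ^ 2)⁻¹)
    (g' := fun y : ℝ => ∑' n : ℕ, ((y + n) ^ 2)⁻¹) isOpen_Ioi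
  · exact tendstoUniformlyOn_tsum_nat hsum (fun k x hx => hub k x hx)
  · filter_upwards with N x hx
    exact hasDerivAt_D N (lt_trans hc0 hx)
  · intro x hx
    exact tendsto_D_psif (lt_trans hc0 hx)
  · rw [Set.mem_Ioi, hc]; linarith

lemma trigamma_eq {μ : ℝ} (hμ : 0 < μ) : trigamma μ = ∑' n : ℕ, ((μ + n) ^ 2)⁻¹ := by
  have heq : digamma =ᶠ[𝓝 μ] psif := by
    filter_upwards [Ioi_mem_nhds hμ] with x hx
    rw [Set.mem_Ioi] at hx
    have hd : DifferentiableAt ℝ Real.Gamma x := Real.differentiableAt_Gamma (Gamma_ne_neg_nat hx)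
    have hne : Real.Gamma x ≠ 0 := (Real.Gamma_pos_of_pos hx).ne'
    have : psif x = deriv Real.Gamma x / Real.Gamma x := by
      unfold psif
      rw [show Real.log ∘ Real.Gamma = fun y => Real.log (Real.Gamma y) from rfl]
      exact deriv.log hd hne
    rw [this]
    rfl
  rw [trigamma, heq.deriv_eq, (hasDerivAt_psif hμ).deriv]

lemma F_tendsto_zero {μ : ℝ} (hμ : 0 < μ) :
    Tendsto (fun N : ℕ => 1 / (μ + N) + 1 / (2 * (μ + N) ^ 2) + 1 / (6 * (μ + N) ^ 3))
      atTop (𝓝 0) := by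
  have h : Tendsto (fun N : ℕ => (μ + N : ℝ)) atTop atTop :=
    tendsto_atTop_add_const_left _ μ tendsto_natCast_atTop_atTop
  have h1 : Tendsto (fun N : ℕ => (μ + N : ℝ)⁻¹) atTop (𝓝 0) := tendsto_inv_atTop_zero.comp h
  have h2 : Tendsto (fun N : ℕ => (μ + N : ℝ)⁻¹ + 2⁻¹ * ((μ + N : ℝ)⁻¹)^2
      + 6⁻¹ * ((μ + N : ℝ)⁻¹)^3) atTop (𝓝 ((0:ℝ) + 2⁻¹ * 0^2 + 6⁻¹ * 0^3)) :=
    (h1.add ((h1.pow 2).const_mul _)).add ((h1.pow 3).const_mul _)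
  norm_num at h2
  apply h2.congr
  intro N
  rw [one_div, one_div (2 * _), one_div (6 * _), mul_inv, mul_inv]
  ring

theorem stmt_12 (μ : ℝ) (hμ : 0 < μ) :
    trigamma μ < 1 / μ + 1 / (2 * μ ^ 2) + 1 / (6 * μ ^ 3) := by
  set F : ℝ → ℝ := fun x => 1 / x + 1 / (2 * x ^ 2) + 1 / (6 * x ^ 3) with hF
  set g : ℕ → ℝ := fun n => F (μ + n) with hg
  set b : ℕ → ℝ := fun n => g n - g (n + 1) with hb
  set a : ℕ → ℝ := fun n => ((μ + n) ^ 2)⁻¹ with ha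
  have hkey : ∀ n : ℕ, b n = a n + (6 * (μ + n) ^ 3 * (μ + n + 1) ^ 3)⁻¹ := by
    intro n
    have hx : (0:ℝ) < μ + n := by positivity
    have hx1 : (0:ℝ) < μ + n + 1 := by linarith
    have hgen : ∀ x : ℝ, 0 < x → F x - F (x + 1) = (x ^ 2)⁻¹ + (6 * x ^ 3 * (x + 1) ^ 3)⁻¹ := by
      intro x hx0
      have hx10 : (0:ℝ) < x + 1 := by linarith
      rw [hF]
      field_simp
      ring
    have h2 : (μ + (n+1:ℕ) : ℝ) = (μ + n) + 1 := by push_cast; ring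
    simp only [hb, hg, ha, h2]
    exact hgen (μ + n) hx
  have hbpos : ∀ n, 0 < b n - a n := by
    intro n
    rw [hkey n]
    have hx : (0:ℝ) < μ + n := by positivity
    have : (0:ℝ) < (6 * (μ + n) ^ 3 * (μ + n + 1) ^ 3)⁻¹ := by positivity
    linarith
  have hanneg : ∀ n, 0 ≤ a n := fun n => by positivity
  have hbsum : HasSum b (g 0) := by
    rw [hasSum_iff_tendsto_nat_of_nonneg (fun n => by linarith [hbpos n, hanneg n])]
    have hts : ∀ N : ℕ, ∑ k ∈ Finset.range N, b k = g 0 - g N := fun N =>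
      Finset.sum_range_sub' g N
    rw [show (𝓝 (g 0)) = 𝓝 (g 0 - 0) by rw [sub_zero]]
    refine Tendsto.congr (fun N => (hts N).symm) (tendsto_const_nhds.sub ?_)
    exact F_tendsto_zero hμ
  have hlt : ∑' n, a n < ∑' n, b n :=
    Summable.tsum_lt_tsum_of_nonneg hanneg (fun n => by linarith [hbpos n])
      (by linarith [hbpos 0]) hbsum.summable
  have hrhs : g 0 = 1 / μ + 1 / (2 * μ ^ 2) + 1 / (6 * μ ^ 3) := by
    simp [hg, hF]
  calc trigamma μ = ∑' n, a n := trigamma_eq hμ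
    _ < ∑' n, b n := hlt
    _ = g 0 := hbsum.tsum_eq
    _ = _ := hrhs
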